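/- Let G be a countable directed graph. Any path w ∈ 𝔽⁺(G) decomposes uniquely as a product w = w_l v_l w_{l-1} v_{l-1} ⋯ w_1 v_1 w_0, where each w_i is either a vertex (a path of length zero) or a path all of whose edges lie in a single transitive component of G, and each v_i is an edge whose source and range lie in distinct transitive components of G. -/

import Mathlib

noncomputable section

/-! ## Countable directed graphs and their path spaces -/

/-- A countable directed graph: countable sets of vertices and edges together
with source and range maps. -/
structure DGraph : Type 1 where
  V : Type
  E : Type
  countV : Countable V
  countE : Countable E
  src : E → V
  rng : E → V

namespace DGraph

variable (G : DGraph)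

instance : Countable G.V := G.countV
instance : Countable G.E := G.countE

/-- A path of positive length is a nonempty list of edges `[e_k, …, e_1]`
(written right to left) with `s(e_{i+1}) = r(e_i)`; a path of length zero is a vertex. -/
def Path : Type := G.V ⊕ {l : List G.E // l ≠ [] ∧ List.Chain' (fun a b => G.src a = G.rng b) l}

instance : Countable G.Path := by
  unfold Path; infer_instance

/-- The source vertex of a path. -/
def psrc : G.Path → G.V
  | .inl x => x
  | .inr l => G.src (l.1.getLast l.2.1)

/-- The range vertex of a path. -/
def prng : G.Path → G.V
  | .inl x => x
  | .inr l => G.rng (l.1.head l.2.1)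

/-- The product `p q` is defined exactly when `s(p) = r(q)`. -/
def Composable (p q : G.Path) : Prop := G.psrc p = G.prng q

/-- Composition of composable paths (`pcomp p q _` is the path "first `q`, then `p`"). -/
def pcomp : (p q : G.Path) → G.Composable p q → G.Path
  | .inl _, q, _ => q
  | .inr l, .inl _, _ => .inr l
  | .inr l, .inr m, h => .inr ⟨l.1 ++ m.1, by
      refine ⟨by simp [l.2.1], l.2.2.append m.2.2 ?_⟩
      intro a ha b hb
      rw [List.getLast?_eq_getLast_of_ne_nil l.2.1, Option.mem_some_iff] at ha
      rw [List.head?_eq_head m.2.1, Option.mem_some_iff] at hb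
      subst ha; subst hb
      exact h⟩

/-- The length of a path. -/
def plen : G.Path → ℕ
  | .inl _ => 0
  | .inr l => l.1.length

/-- The list of edges of a path (ordered from last edge traversed to first). -/
def pedges : G.Path → List G.E
  | .inl _ => []
  | .inr l => l.1

/-- A vertex regarded as a path of length zero. -/
def vpath (x : G.V) : G.Path := .inl x

/-- An edge regarded as a path of length one. -/
def epath (e : G.E) : G.Path := .inr ⟨[e], by exact ⟨by simp, List.isChain_singleton e⟩⟩

/-- There is a directed path from `x` to `y`. -/
def Reach (x y : G.V) : Prop := ∃ p : G.Path, G.psrc p = x ∧ G.prng p = y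

/-- `x` and `y` are adjacent in the underlying undirected graph. -/
def UAdj (x y : G.V) : Prop :=
  ∃ e : G.E, (G.src e = x ∧ G.rng e = y) ∨ (G.src e = y ∧ G.rng e = x)

/-- `x` and `y` lie in the same connected component of the underlying undirected graph. -/
def SameUComp : G.V → G.V → Prop := Relation.ReflTransGen G.UAdj

/-- `G` is transitive in each component: any two vertices in the same connected component
of the underlying undirected graph are joined by a directed path. -/
def TransitiveInComponents : Prop := ∀ x y : G.V, G.SameUComp x y → G.Reach x y

/-- `x` and `y` are mutually reachable, i.e. lie in the same transitive component. -/
def MutReach (x y : G.V) : Prop := G.Reach x y ∧ G.Reach y x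

/-- The vertex `x` supports a loop edge. -/
def HasLoop (x : G.V) : Prop := ∃ e : G.E, G.src e = x ∧ G.rng e = x

/-- The vertex `x` supports a cycle (a path of positive length from `x` to `x`). -/
def OnCycle (x : G.V) : Prop := ∃ p : G.Path, 0 < G.plen p ∧ G.psrc p = x ∧ G.prng p = x

end DGraph

namespace DGraph

variable (G : DGraph)

/-- All edges of the path `p` lie in a single transitive component of `G`. -/
def InOneComponent (p : G.Path) : Prop :=
  ∃ c : G.V, ∀ e ∈ G.pedges p, G.MutReach (G.src e) c ∧ G.MutReach (G.rng e) c

/-- The edge list of the alternating product `w_l v_l w_{l-1} ⋯ w_1 v_1 w_0`. -/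
def altEdges : (l : ℕ) → (Fin (l + 1) → G.Path) → (Fin l → G.E) → List G.E
  | 0, ws, _ => G.pedges (ws 0)
  | l + 1, ws, vs =>
      G.pedges (ws (Fin.last (l + 1))) ++
        vs (Fin.last l) :: altEdges l (fun i => ws i.castSucc) (fun i => vs i.castSucc)

/-- `w = w_l v_l w_{l-1} ⋯ w_1 v_1 w_0` is a decomposition of the path `w` in which every
`w_i` is a vertex or a path whose edges lie in a single transitive component, and every
`v_i` is an edge whose source and range lie in distinct transitive components. -/
structure IsDecompOf (w : G.Path) (l : ℕ) (ws : Fin (l + 1) → G.Path)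
    (vs : Fin l → G.E) : Prop where
  pieces : ∀ i, G.InOneComponent (ws i)
  crossings : ∀ i : Fin l, ¬ G.MutReach (G.src (vs i)) (G.rng (vs i))
  edges_eq : G.pedges w = G.altEdges l ws vs
  src_eq : G.psrc w = G.psrc (ws 0)
  rng_eq : G.prng w = G.prng (ws (Fin.last l))
  chain_src : ∀ i : Fin l, G.src (vs i) = G.prng (ws i.castSucc)
  chain_rng : ∀ i : Fin l, G.psrc (ws i.succ) = G.rng (vs i)

end DGraph

namespace DGraph

variable {G : DGraph}

/-! ### Basic path lemmas -/

lemma chain'_pedges (p : G.Path) :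
    List.Chain' (fun a b => G.src a = G.rng b) (G.pedges p) := by
  cases p with
  | inl x => exact List.isChain_nil
  | inr l => exact l.2.2

lemma path_eq_vpath_of_pedges_nil {p : G.Path} (h : G.pedges p = []) :
    p = G.vpath (G.psrc p) := by
  cases p with
  | inl x => rfl
  | inr l => exact absurd h l.2.1

lemma prng_eq_psrc_of_pedges_nil {p : G.Path} (h : G.pedges p = []) :
    G.prng p = G.psrc p := by
  cases p with
  | inl x => rfl
  | inr l => exact absurd h l.2.1

lemma prng_eq_of_head? {p : G.Path} {e : G.E} (h : (G.pedges p).head? = some e) :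
    G.prng p = G.rng e := by
  cases p with
  | inl x => simp [pedges] at h
  | inr l =>
    rw [show G.pedges (Sum.inr l) = l.1 from rfl, List.head?_eq_head l.2.1,
      Option.some_inj] at h
    rw [show G.prng (Sum.inr l) = G.rng (l.1.head l.2.1) from rfl, h]

lemma psrc_eq_of_getLast? {p : G.Path} {e : G.E} (h : (G.pedges p).getLast? = some e) :
    G.psrc p = G.src e := by
  cases p with
  | inl x => simp [pedges] at h
  | inr l =>
    rw [show G.pedges (Sum.inr l) = l.1 from rfl, List.getLast?_eq_getLast l.2.1,
      Option.some_inj] at h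
    rw [show G.psrc (Sum.inr l) = G.src (l.1.getLast l.2.1) from rfl, h]

lemma path_ext {p q : G.Path} (he : G.pedges p = G.pedges q) (hs : G.psrc p = G.psrc q) :
    p = q := by
  cases p with
  | inl x =>
    cases q with
    | inl y => exact congrArg Sum.inl hs
    | inr m => exact absurd he.symm m.2.1
  | inr l =>
    cases q with
    | inl y => exact absurd he l.2.1
    | inr m => exact congrArg Sum.inr (Subtype.ext he)

@[simp] lemma pedges_vpath (x : G.V) : G.pedges (G.vpath x) = [] := rfl

@[simp] lemma psrc_vpath (x : G.V) : G.psrc (G.vpath x) = x := rfl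

@[simp] lemma prng_vpath (x : G.V) : G.prng (G.vpath x) = x := rfl

/-! ### Reachability lemmas -/

lemma psrc_pcomp (p q : G.Path) (h : G.Composable p q) :
    G.psrc (G.pcomp p q h) = G.psrc q := by
  cases p with
  | inl x => rfl
  | inr l =>
    cases q with
    | inl y => exact h
    | inr m =>
      have hm := m.2.1
      apply psrc_eq_of_getLast?
      rw [show G.pedges (G.pcomp (Sum.inr l) (Sum.inr m) h) = l.1 ++ m.1 from rfl,
        List.getLast?_append_of_ne_nil _ hm]
      exact List.getLast?_eq_getLast hm

lemma prng_pcomp (p q : G.Path) (h : G.Composable p q) :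
    G.prng (G.pcomp p q h) = G.prng p := by
  cases p with
  | inl x => exact h.symm
  | inr l =>
    cases q with
    | inl y => rfl
    | inr m =>
      have hl := l.2.1
      apply prng_eq_of_head?
      rw [show G.pedges (G.pcomp (Sum.inr l) (Sum.inr m) h) = l.1 ++ m.1 from rfl,
        List.head?_append_of_ne_nil _ hl]
      exact List.head?_eq_head hl

lemma Reach.refl (x : G.V) : G.Reach x x := ⟨G.vpath x, rfl, rfl⟩

lemma Reach.trans {x y z : G.V} (h1 : G.Reach x y) (h2 : G.Reach y z) : G.Reach x z := by
  obtain ⟨p, hp1, hp2⟩ := h1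
  obtain ⟨q, hq1, hq2⟩ := h2
  have hcomp : G.Composable q p := by rw [Composable, hq1, hp2]
  exact ⟨G.pcomp q p hcomp, by rw [psrc_pcomp, hp1], by rw [prng_pcomp, hq2]⟩

lemma MutReach.refl (x : G.V) : G.MutReach x x := ⟨Reach.refl x, Reach.refl x⟩

lemma MutReach.symm {x y : G.V} (h : G.MutReach x y) : G.MutReach y x := ⟨h.2, h.1⟩

lemma MutReach.trans {x y z : G.V} (h1 : G.MutReach x y) (h2 : G.MutReach y z) :
    G.MutReach x z := ⟨h1.1.trans h2.1, h2.2.trans h1.2⟩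

lemma mutReach_ends_of_component {e : G.E} {c : G.V} (h1 : G.MutReach (G.src e) c)
    (h2 : G.MutReach (G.rng e) c) : G.MutReach (G.src e) (G.rng e) :=
  h1.trans h2.symm

/-! ### Prepending an edge to a path, and removing the leading edge -/

open Classical in
variable (G) in
/-- Prepend the edge `e` to the path `p` (junk value if not composable). -/
def consPath (e : G.E) : G.Path → G.Path
  | .inl _ => G.epath e
  | .inr l =>
    if h : G.src e = G.rng (l.1.head l.2.1) then
      .inr ⟨e :: l.1, List.cons_ne_nil _ _, l.2.2.cons (by
        intro y hy
        rw [List.head?_eq_head l.2.1, Option.mem_some_iff] at hy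
        rw [← hy]; exact h)⟩
    else G.epath e

lemma pedges_consPath {e : G.E} {p : G.Path} (h : G.src e = G.prng p) :
    G.pedges (G.consPath e p) = e :: G.pedges p := by
  cases p with
  | inl x => rfl
  | inr l =>
    have h' : G.src e = G.rng (l.1.head l.2.1) := h
    rw [consPath]; erw [dif_pos h']
    rfl

lemma psrc_consPath {e : G.E} {p : G.Path} (h : G.src e = G.prng p) :
    G.psrc (G.consPath e p) = G.psrc p := by
  cases p with
  | inl x => exact h
  | inr l =>
    have h' : G.src e = G.rng (l.1.head l.2.1) := h
    rw [consPath]; erw [dif_pos h']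
    apply psrc_eq_of_getLast?
    show (e :: (l.1 : List G.E)).getLast? = some ((l.1 : List G.E).getLast l.2.1)
    rw [← List.getLast?_eq_getLast l.2.1]
    obtain ⟨a, t, hl⟩ := List.exists_cons_of_ne_nil l.2.1
    rw [hl, List.getLast?_cons_cons]

open Classical in
variable (G) in
/-- Remove the leading edge of a path (identity on vertices). -/
def tailPath : G.Path → G.Path
  | .inl x => .inl x
  | .inr l =>
    if h : l.1.tail = [] then .inl (G.psrc (.inr l))
    else .inr ⟨l.1.tail, h, l.2.2.tail⟩

lemma pedges_tailPath (p : G.Path) : G.pedges (G.tailPath p) = (G.pedges p).tail := by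
  cases p with
  | inl x => rfl
  | inr l =>
    rw [tailPath]
    split_ifs
    · rename_i h; erw [dif_pos h]; exact h.symm
    · erw [dif_neg ‹_›]; rfl

lemma psrc_tailPath (p : G.Path) : G.psrc (G.tailPath p) = G.psrc p := by
  cases p with
  | inl x => rfl
  | inr l =>
    rw [tailPath]
    split_ifs
    · erw [dif_pos ‹_›]; rfl
    · rename_i h
      erw [dif_neg h]
      apply psrc_eq_of_getLast?
      show (l.1 : List G.E).tail.getLast? = some ((l.1 : List G.E).getLast l.2.1)
      rw [← List.getLast?_eq_getLast l.2.1]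
      obtain ⟨a, t, hl⟩ := List.exists_cons_of_ne_nil l.2.1
      have ht : t ≠ [] := by rw [hl] at h; simpa using h
      obtain ⟨b, t', rfl⟩ := List.exists_cons_of_ne_nil ht
      rw [hl, List.tail_cons, List.getLast?_cons_cons]

lemma src_eq_prng_tailPath {p : G.Path} {e : G.E} {t : List G.E}
    (h : G.pedges p = e :: t) : G.src e = G.prng (G.tailPath p) := by
  cases t with
  | nil =>
    have h0 : G.pedges (G.tailPath p) = [] := by
      rw [pedges_tailPath, h, List.tail_cons]
    rw [prng_eq_psrc_of_pedges_nil h0, psrc_tailPath]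
    have hg : (G.pedges p).getLast? = some e := by rw [h]; rfl
    exact (psrc_eq_of_getLast? hg).symm
  | cons f t' =>
    have hc := chain'_pedges p
    rw [h, List.Chain', List.isChain_cons] at hc
    have hef : G.src e = G.rng f := hc.1 f rfl
    have hh : (G.pedges (G.tailPath p)).head? = some f := by
      rw [pedges_tailPath, h]; rfl
    rw [prng_eq_of_head? hh, hef]

lemma consPath_tailPath {p : G.Path} {e : G.E} {t : List G.E}
    (h : G.pedges p = e :: t) : G.consPath e (G.tailPath p) = p := by
  have hpr := src_eq_prng_tailPath h
  apply path_ext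
  · rw [pedges_consPath hpr, pedges_tailPath, h, List.tail_cons]
  · rw [psrc_consPath hpr, psrc_tailPath]

/-! ### InOneComponent lemmas -/

lemma inOne_vpath (x : G.V) : G.InOneComponent (G.vpath x) :=
  ⟨x, by intro e he; simp at he⟩

lemma InOneComponent.tailPath {p : G.Path} (hp : G.InOneComponent p) :
    G.InOneComponent (G.tailPath p) := by
  obtain ⟨c, hc⟩ := hp
  refine ⟨c, fun e he => hc e ?_⟩
  rw [pedges_tailPath] at he
  exact List.mem_of_mem_tail he

lemma InOneComponent.consPath {e : G.E} {p : G.Path} (h : G.src e = G.prng p)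
    (hm : G.MutReach (G.src e) (G.rng e)) (hp : G.InOneComponent p) :
    G.InOneComponent (G.consPath e p) := by
  cases hL : G.pedges p with
  | nil =>
    refine ⟨G.src e, fun f hf => ?_⟩
    rw [pedges_consPath h, hL] at hf
    simp only [List.mem_singleton] at hf
    rw [hf]
    exact ⟨MutReach.refl _, hm.symm⟩
  | cons g t =>
    obtain ⟨c, hc⟩ := hp
    have hg := hc g (by rw [hL]; exact List.mem_cons_self)
    have hse : G.src e = G.rng g := by
      rw [h, prng_eq_of_head? (p := p) (by rw [hL]; rfl)]
    have hsc : G.MutReach (G.src e) c := by rw [hse]; exact hg.2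
    refine ⟨c, fun f hf => ?_⟩
    rw [pedges_consPath h] at hf
    rcases List.mem_cons.mp hf with hf | hf
    · rw [hf]
      exact ⟨hsc, hm.symm.trans hsc⟩
    · exact hc f hf

/-! ### altEdges lemmas -/

variable (G) in
/-- The part of `altEdges` below the top piece. -/
def tailAlt : (l : ℕ) → (Fin (l + 1) → G.Path) → (Fin l → G.E) → List G.E
  | 0, _, _ => []
  | l + 1, ws, vs =>
      vs (Fin.last l) :: G.altEdges l (fun i => ws i.castSucc) (fun i => vs i.castSucc)

lemma altEdges_eq_append (l : ℕ) (ws : Fin (l + 1) → G.Path) (vs : Fin l → G.E) :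
    G.altEdges l ws vs = G.pedges (ws (Fin.last l)) ++ G.tailAlt l ws vs := by
  cases l with
  | zero =>
    show G.pedges (ws 0) = G.pedges (ws (Fin.last 0)) ++ []
    rw [List.append_nil, Fin.last_zero]
  | succ l => rfl

lemma tailAlt_update (l : ℕ) (ws : Fin (l + 1) → G.Path) (vs : Fin l → G.E)
    (p : G.Path) :
    G.tailAlt l (Function.update ws (Fin.last l) p) vs = G.tailAlt l ws vs := by
  cases l with
  | zero => rfl
  | succ l =>
    have hfun : (fun i : Fin (l + 1) =>
        Function.update ws (Fin.last (l + 1)) p i.castSucc) = fun i => ws i.castSucc := by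
      funext i
      exact Function.update_of_ne (Fin.castSucc_lt_last i).ne p ws
    show _ :: G.altEdges _ _ _ = _ :: G.altEdges _ _ _
    rw [hfun]

/-! ### The canonical decomposition -/

variable (G) in
/-- The type of decomposition data. -/
abbrev Dec : Type := (l : ℕ) × ((Fin (l + 1) → G.Path) × (Fin l → G.E))

open Classical in
variable (G) in
/-- Extend a decomposition by one more edge on top. -/
def stepD (e : G.E) (d : G.Dec) : G.Dec :=
  if G.MutReach (G.src e) (G.rng e) then
    ⟨d.1, (Function.update d.2.1 (Fin.last d.1) (G.consPath e (d.2.1 (Fin.last d.1))),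
      d.2.2)⟩
  else ⟨d.1 + 1, (Fin.snoc d.2.1 (G.vpath (G.rng e)), Fin.snoc d.2.2 e)⟩

variable (G) in
/-- The canonical decomposition of the path with edge list `L` and source `x`. -/
def decomposeList (x : G.V) : List G.E → G.Dec
  | [] => ⟨0, (fun _ => G.vpath x, Fin.elim0)⟩
  | e :: L => G.stepD e (decomposeList x L)

variable (G) in
/-- The range of a path with edge list `L`, with fallback `x` for the empty list. -/
def fallRng (x : G.V) : List G.E → G.V
  | [] => x
  | e :: _ => G.rng e

/-- The invariant satisfied by decomposition data for the path with edge list `L`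
and source `x`. -/
structure Inv (x : G.V) (L : List G.E) (d : G.Dec) : Prop where
  pieces : ∀ i, G.InOneComponent (d.2.1 i)
  crossings : ∀ i, ¬ G.MutReach (G.src (d.2.2 i)) (G.rng (d.2.2 i))
  edges : G.altEdges d.1 d.2.1 d.2.2 = L
  src0 : G.psrc (d.2.1 0) = x
  csrc : ∀ i, G.src (d.2.2 i) = G.prng (d.2.1 i.castSucc)
  crng : ∀ i, G.psrc (d.2.1 i.succ) = G.rng (d.2.2 i)

lemma Inv.prng_last {x : G.V} {L : List G.E} {d : G.Dec} (h : Inv x L d) :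
    G.prng (d.2.1 (Fin.last d.1)) = G.fallRng x L := by
  obtain ⟨l, ws, vs⟩ := d
  have he := h.edges
  rw [altEdges_eq_append] at he
  cases hL : G.pedges (ws (Fin.last l)) with
  | cons f t =>
    rw [← he, hL]
    exact prng_eq_of_head? (by rw [hL]; rfl)
  | nil =>
    rw [hL, List.nil_append] at he
    cases l with
    | zero =>
      rw [← he]
      show G.prng (ws (Fin.last 0)) = x
      rw [prng_eq_psrc_of_pedges_nil hL]
      exact h.src0
    | succ l =>
      rw [← he]
      show G.prng (ws (Fin.last (l + 1))) = G.rng (vs (Fin.last l))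
      rw [prng_eq_psrc_of_pedges_nil hL, ← Fin.succ_last]
      exact h.crng (Fin.last l)

lemma fallRng_pedges (w : G.Path) : G.fallRng (G.psrc w) (G.pedges w) = G.prng w := by
  cases hL : G.pedges w with
  | nil => rw [prng_eq_psrc_of_pedges_nil hL]; rfl
  | cons e t =>
    rw [show G.fallRng (G.psrc w) (e :: t) = G.rng e from rfl,
      prng_eq_of_head? (p := w) (by rw [hL]; rfl)]

/-! ### Existence: the canonical decomposition satisfies the invariant -/

lemma Inv.step {x : G.V} {L : List G.E} {d : G.Dec} {e : G.E}
    (inv : Inv x L d) (hse : G.src e = G.prng (d.2.1 (Fin.last d.1))) :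
    Inv x (e :: L) (G.stepD e d) := by
  obtain ⟨l, ws, vs⟩ := d
  by_cases hm : G.MutReach (G.src e) (G.rng e)
  · rw [stepD, if_pos hm]
    set ws' := Function.update ws (Fin.last l) (G.consPath e (ws (Fin.last l))) with hws'
    have hpsrc : ∀ j, G.psrc (ws' j) = G.psrc (ws j) := by
      intro j
      by_cases hj : j = Fin.last l
      · subst hj
        rw [hws', Function.update_self]
        exact psrc_consPath hse
      · rw [hws', Function.update_of_ne hj]
    refine ⟨?_, inv.crossings, ?_, ?_, ?_, ?_⟩ <;> dsimp only
    · intro i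
      by_cases hi : i = Fin.last l
      · subst hi
        show G.InOneComponent (ws' (Fin.last l))
        rw [hws', Function.update_self]
        exact (inv.pieces _).consPath hse hm
      · show G.InOneComponent (ws' i)
        rw [hws', Function.update_of_ne hi]
        exact inv.pieces i
    · show G.altEdges l ws' vs = e :: L
      rw [altEdges_eq_append, hws', Function.update_self, tailAlt_update,
        pedges_consPath hse, List.cons_append, ← altEdges_eq_append, inv.edges]
    · show G.psrc (ws' 0) = x
      rw [hpsrc 0]; exact inv.src0
    · intro i
      show G.src (vs i) = G.prng (ws' i.castSucc)
      rw [hws', Function.update_of_ne (Fin.castSucc_lt_last i).ne]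
      exact inv.csrc i
    · intro i
      show G.psrc (ws' i.succ) = G.rng (vs i)
      rw [hpsrc i.succ]; exact inv.crng i
  · rw [stepD, if_neg hm]
    have hws2 : (fun i : Fin (l + 1) =>
        Fin.snoc (α := fun _ : Fin (l + 2) => G.Path) ws (G.vpath (G.rng e)) i.castSucc)
        = ws := by funext i; rw [Fin.snoc_castSucc]
    have hvs2 : (fun i : Fin l =>
        Fin.snoc (α := fun _ : Fin (l + 1) => G.E) vs e i.castSucc) = vs := by
      funext i; rw [Fin.snoc_castSucc]
    refine ⟨?_, ?_, ?_, ?_, ?_, ?_⟩ <;> dsimp only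
    · intro i
      refine Fin.lastCases ?_ ?_ i
      · rw [Fin.snoc_last]
        exact inOne_vpath _
      · intro j
        rw [Fin.snoc_castSucc]
        exact inv.pieces j
    · intro i
      refine Fin.lastCases ?_ ?_ i
      · rw [Fin.snoc_last]
        exact hm
      · intro j
        rw [Fin.snoc_castSucc]
        exact inv.crossings j
    · rw [altEdges, Fin.snoc_last, Fin.snoc_last, hws2, hvs2, pedges_vpath,
        List.nil_append, inv.edges]
    · rw [show (0 : Fin (l + 1 + 1)) = (0 : Fin (l + 1)).castSucc by
          rw [Fin.castSucc_zero], Fin.snoc_castSucc]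
      exact inv.src0
    · intro i
      refine Fin.lastCases ?_ ?_ i
      · rw [Fin.snoc_last, Fin.snoc_castSucc]
        exact hse
      · intro j
        rw [Fin.snoc_castSucc, Fin.snoc_castSucc]
        exact inv.csrc j
    · intro i
      refine Fin.lastCases ?_ ?_ i
      · rw [Fin.succ_last, Fin.snoc_last, Fin.snoc_last]
        rfl
      · intro j
        rw [Fin.succ_castSucc, Fin.snoc_castSucc, Fin.snoc_castSucc]
        exact inv.crng j

theorem inv_decomposeList (x : G.V) (L : List G.E)
    (hc : List.Chain' (fun a b => G.src a = G.rng b) L)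
    (hx : ∀ h : L ≠ [], G.src (L.getLast h) = x) :
    Inv x L (G.decomposeList x L) := by
  induction L with
  | nil =>
    exact ⟨fun i => inOne_vpath x, fun i => i.elim0, rfl, rfl, fun i => i.elim0,
      fun i => i.elim0⟩
  | cons e L IH =>
    have hc' : List.Chain' (fun a b => G.src a = G.rng b) L := hc.tail
    have hx' : ∀ h : L ≠ [], G.src (L.getLast h) = x := by
      intro h
      have h2 := hx (List.cons_ne_nil e L)
      rwa [List.getLast_cons h] at h2
    have inv := IH hc' hx'
    have hse : G.src e =
        G.prng ((G.decomposeList x L).2.1 (Fin.last (G.decomposeList x L).1)) := by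
      rw [inv.prng_last]
      cases L with
      | nil => exact hx (List.cons_ne_nil e [])
      | cons f t => exact (List.isChain_cons.mp hc).1 f rfl
    exact inv.step hse

/-! ### Uniqueness -/

theorem inv_unique (x : G.V) (L : List G.E) :
    ∀ d : G.Dec, Inv x L d → d = G.decomposeList x L := by
  induction L with
  | nil =>
    rintro ⟨l, ws, vs⟩ inv
    have he := inv.edges
    rw [altEdges_eq_append] at he
    have h2 : G.tailAlt l ws vs = [] := (List.append_eq_nil_iff.mp he).2
    have h1 : G.pedges (ws (Fin.last l)) = [] := (List.append_eq_nil_iff.mp he).1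
    cases l with
    | succ l => exact absurd h2 (List.cons_ne_nil _ _)
    | zero =>
      have hws : ws = fun _ => G.vpath x := by
        funext i
        have h0 : i = 0 := Fin.eq_zero i
        subst h0
        have hv := path_eq_vpath_of_pedges_nil (p := ws 0) h1
        rw [hv, inv.src0]
      have hvs : vs = Fin.elim0 := funext fun i => i.elim0
      show (⟨0, (ws, vs)⟩ : G.Dec) = ⟨0, (fun _ => G.vpath x, Fin.elim0)⟩
      rw [hws, hvs]
  | cons e L IH =>
    rintro ⟨l, ws, vs⟩ inv
    have he := inv.edges
    rw [altEdges_eq_append] at he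
    cases hL : G.pedges (ws (Fin.last l)) with
    | cons f t =>
      rw [hL, List.cons_append] at he
      injection he with h1 h2
      subst h1
      obtain ⟨c, hc⟩ := inv.pieces (Fin.last l)
      have hce := hc f (by rw [hL]; exact List.mem_cons_self)
      have hm : G.MutReach (G.src f) (G.rng f) :=
        mutReach_ends_of_component hce.1 hce.2
      set ws' := Function.update ws (Fin.last l) (G.tailPath (ws (Fin.last l)))
        with hws'
      have hpsrc : ∀ j, G.psrc (ws' j) = G.psrc (ws j) := by
        intro j
        by_cases hj : j = Fin.last l
        · subst hj
          rw [hws', Function.update_self, psrc_tailPath]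
        · rw [hws', Function.update_of_ne hj]
      have inv' : Inv x L ⟨l, (ws', vs)⟩ := by
        refine ⟨?_, inv.crossings, ?_, ?_, ?_, ?_⟩
        · intro i
          by_cases hi : i = Fin.last l
          · subst hi
            show G.InOneComponent (ws' (Fin.last l))
            rw [hws', Function.update_self]
            exact (inv.pieces _).tailPath
          · show G.InOneComponent (ws' i)
            rw [hws', Function.update_of_ne hi]
            exact inv.pieces i
        · show G.altEdges l ws' vs = L
          rw [altEdges_eq_append, hws', Function.update_self, tailAlt_update,
            pedges_tailPath, hL, List.tail_cons]
          exact h2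
        · show G.psrc (ws' 0) = x
          rw [hpsrc 0]; exact inv.src0
        · intro i
          show G.src (vs i) = G.prng (ws' i.castSucc)
          rw [hws', Function.update_of_ne (Fin.castSucc_lt_last i).ne]
          exact inv.csrc i
        · intro i
          show G.psrc (ws' i.succ) = G.rng (vs i)
          rw [hpsrc i.succ]; exact inv.crng i
      have hIH := IH _ inv'
      show (⟨l, (ws, vs)⟩ : G.Dec) = G.stepD f (G.decomposeList x L)
      rw [← hIH, stepD, if_pos hm]
      dsimp only
      have hupd : Function.update ws' (Fin.last l) (G.consPath f (ws' (Fin.last l)))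
          = ws := by
        rw [hws', Function.update_idem, Function.update_self,
          consPath_tailPath hL, Function.update_eq_self]
      rw [hupd]
    | nil =>
      rw [hL, List.nil_append] at he
      cases l with
      | zero => simp [tailAlt] at he
      | succ l' =>
        rw [show G.tailAlt (l' + 1) ws vs = vs (Fin.last l') ::
          G.altEdges l' (fun i => ws i.castSucc) (fun i => vs i.castSucc) from rfl] at he
        injection he with h1 h2
        have inv' : Inv x L ⟨l', (fun i => ws i.castSucc, fun i => vs i.castSucc)⟩ := by
          refine ⟨fun i => inv.pieces _, fun i => inv.crossings _, h2, ?_, ?_, ?_⟩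
          · show G.psrc (ws (Fin.castSucc 0)) = x
            rw [Fin.castSucc_zero]
            exact inv.src0
          · intro i
            show G.src (vs i.castSucc) = G.prng (ws i.castSucc.castSucc)
            exact inv.csrc i.castSucc
          · intro i
            show G.psrc (ws i.succ.castSucc) = G.rng (vs i.castSucc)
            rw [← Fin.succ_castSucc]
            exact inv.crng i.castSucc
        have hIH := IH _ inv'
        have hcross : ¬ G.MutReach (G.src e) (G.rng e) := by
          rw [← h1]
          exact inv.crossings (Fin.last l')
        show (⟨l' + 1, (ws, vs)⟩ : G.Dec) = G.stepD e (G.decomposeList x L)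
        rw [← hIH, stepD, if_neg hcross]
        dsimp only
        have hws : Fin.snoc (α := fun _ : Fin (l' + 2) => G.Path)
            (fun i : Fin (l' + 1) => ws i.castSucc) (G.vpath (G.rng e)) = ws := by
          funext j
          refine Fin.lastCases ?_ ?_ j
          · rw [Fin.snoc_last]
            have hv := path_eq_vpath_of_pedges_nil (p := ws (Fin.last (l' + 1))) hL
            rw [hv]
            congr 1
            rw [← Fin.succ_last, inv.crng (Fin.last l')]
            exact (congrArg G.rng h1).symm
          · intro j
            rw [Fin.snoc_castSucc]
        have hvs : Fin.snoc (α := fun _ : Fin (l' + 1) => G.E)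
            (fun i : Fin l' => vs i.castSucc) e = vs := by
          funext j
          refine Fin.lastCases ?_ ?_ j
          · rw [Fin.snoc_last, h1]
          · intro j
            rw [Fin.snoc_castSucc]
        rw [hws, hvs]

end DGraph

/-- **Lemma (Davidson–Katsoulis, Lemma 4).**
Every path `w ∈ 𝔽⁺(G)` decomposes uniquely as a product
`w = w_l v_l w_{l-1} v_{l-1} ⋯ w_1 v_1 w_0` where each `w_i` is a vertex or a path whose
edges lie in a single transitive component of `G`, and each `v_i` is an edge whose source
and range lie in distinct transitive components. -/
theorem unique_alternating_decomposition (G : DGraph) (w : G.Path) :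
    ∃! d : (l : ℕ) × ((Fin (l + 1) → G.Path) × (Fin l → G.E)),
      G.IsDecompOf w d.1 d.2.1 d.2.2 := by
    have hx : ∀ h : G.pedges w ≠ [], G.src ((G.pedges w).getLast h) = G.psrc w := by
      intro h
      exact (DGraph.psrc_eq_of_getLast? (List.getLast?_eq_getLast h)).symm
    have inv0 := G.inv_decomposeList (G.psrc w) (G.pedges w) (DGraph.chain'_pedges w) hx
    refine ⟨G.decomposeList (G.psrc w) (G.pedges w), ?_, ?_⟩
    · exact ⟨inv0.pieces, inv0.crossings, inv0.edges.symm, inv0.src0.symm,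
        (inv0.prng_last.trans (DGraph.fallRng_pedges w)).symm, inv0.csrc, inv0.crng⟩
    · rintro d hd
      exact G.inv_unique (G.psrc w) (G.pedges w) d
        ⟨hd.pieces, hd.crossings, hd.edges_eq.symm, hd.src_eq.symm, hd.chain_src,
          hd.chain_rng⟩
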